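/- The cover pebbling number of any finite Cartesian product of paths is the product of the individual cover pebbling numbers: γ(P_{n_1} □ ⋯ □ P_{n_k}) = ∏_{i=1}^k (2^{n_i} - 1). -/

import Mathlib

open SimpleGraph Finset

/-- A pebbling step: remove two pebbles from `u` and place one on an adjacent vertex `v`. -/
def PebblingStep {V : Type*} [DecidableEq V] (G : SimpleGraph V) (D D' : V → ℕ) : Prop :=
  ∃ u v, G.Adj u v ∧ 2 ≤ D u ∧
    D' = fun w => if w = u then D u - 2 else if w = v then D v + 1 else D w

/-- A distribution is coverable if pebbling steps can put a pebble on every vertex. -/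
def Coverable {V : Type*} [DecidableEq V] (G : SimpleGraph V) (D : V → ℕ) : Prop :=
  ∃ D', Relation.ReflTransGen (PebblingStep G) D D' ∧ ∀ v, 1 ≤ D' v

/-- The cover pebbling number: the least `N` such that every distribution of `N` pebbles
is coverable. -/
noncomputable def coverPebblingNumber {V : Type*} [DecidableEq V] [Fintype V]
    (G : SimpleGraph V) : ℕ :=
  sInf {N | ∀ D : V → ℕ, ∑ v, D v = N → Coverable G D}

/-- A color-respecting pebbling step on a colored distribution. -/
def ColorStep {V C : Type*} [DecidableEq V] [DecidableEq C] (G : SimpleGraph V)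
    (D D' : V → C → ℕ) : Prop :=
  ∃ u v c, G.Adj u v ∧ 2 ≤ D u c ∧
    D' = fun w d => if w = u ∧ d = c then D u c - 2
      else if w = v ∧ d = c then D v c + 1 else D w d

/-- A colored distribution is `Q`-coverable if color-respecting steps can put at least `Q`
pebbles on every vertex. -/
def QCoverable {V C : Type*} [DecidableEq V] [DecidableEq C] [Fintype C] (G : SimpleGraph V)
    (Q : ℕ) (D : V → C → ℕ) : Prop :=
  ∃ D', Relation.ReflTransGen (ColorStep G) D D' ∧ ∀ v, Q ≤ ∑ c, D' v c

/-- A graph is good if its cover pebbling number is realized by a simple distribution. -/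
def IsGood {V : Type*} [DecidableEq V] [Fintype V] (G : SimpleGraph V) : Prop :=
  ∃ u : V, coverPebblingNumber G = ∑ w : V, 2 ^ G.dist u w

/-- The Cartesian (box) product of a family of graphs. -/
def boxProdFamily {ι : Type*} [DecidableEq ι] {V : ι → Type*}
    (G : ∀ i, SimpleGraph (V i)) : SimpleGraph (∀ i, V i) where
  Adj a b := ∃ i, (G i).Adj (a i) (b i) ∧ ∀ j, j ≠ i → a j = b j
  symm := by
    constructor
    rintro a b ⟨i, hadj, hrest⟩
    exact ⟨i, hadj.symm, fun j hj => (hrest j hj).symm⟩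
  loopless := by
    constructor
    rintro a ⟨i, hadj, -⟩
    exact hadj.ne rfl

/-! ### generic helpers -/

abbrev Reach {V : Type*} [DecidableEq V] (G : SimpleGraph V) :=
  Relation.ReflTransGen (PebblingStep G)

lemma step_eq_update {V : Type*} [DecidableEq V] (D : V → ℕ) (u v : V) (huv : u ≠ v) :
    (fun w => if w = u then D u - 2 else if w = v then D v + 1 else D w)
      = Function.update (Function.update D u (D u - 2)) v (D v + 1) := by
  funext w
  rcases eq_or_ne w u with rfl | h1
  · simp [Function.update_apply, huv.symm, if_neg huv]
  · rcases eq_or_ne w v with rfl | h2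
    · simp [Function.update_apply, h1]
    · simp [Function.update_apply, h1, h2]

lemma sum_update {V : Type*} [DecidableEq V] (f : V → ℕ) (a : V) (b : ℕ) (s : Finset V) :
    ∑ x ∈ s, Function.update f a b x
      = (∑ x ∈ s.erase a, f x) + if a ∈ s then b else 0 := by
  by_cases ha : a ∈ s
  · rw [if_pos ha, ← Finset.add_sum_erase _ _ ha, Function.update_self, add_comm]
    congr 1
    exact Finset.sum_congr rfl fun x hx =>
      Function.update_of_ne (Finset.ne_of_mem_erase hx) _ _
  · rw [if_neg ha, Finset.erase_eq_of_notMem ha, add_zero]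
    exact Finset.sum_congr rfl fun x hx =>
      Function.update_of_ne (by rintro rfl; exact ha hx) _ _

lemma geom_two (N : ℕ) : ∑ j : Fin N, 2^(j:ℕ) = 2^N - 1 := by
  rw [Fin.sum_univ_eq_sum_range]
  induction N with
  | zero => simp
  | succ n ih => rw [Finset.sum_range_succ, ih]; have := Nat.one_le_two_pow (n := n); omega

/-! ### product of paths setup -/

section Prod

variable {k : ℕ} (n : Fin (k+1) → ℕ)

abbrev PiW (n : Fin (k+1) → ℕ) := ∀ i : Fin k, Fin (n i.succ)

noncomputable def lsum (t : ℕ) (D : (∀ i, Fin (n i)) → ℕ) : ℕ :=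
  ∑ v ∈ Finset.univ.filter (fun v : ∀ i, Fin (n i) => (v 0 : ℕ) = t), D v

lemma cons_zero' (j : Fin (n 0)) (w : PiW n) : (Fin.cons j w : ∀ i, Fin (n i)) 0 = j :=
  Fin.cons_zero _ _

lemma lsum_fiber (j : Fin (n 0)) (g : (∀ i, Fin (n i)) → ℕ) :
    lsum n (j : ℕ) g = ∑ w : PiW n, g (Fin.cons j w) := by
  classical
  rw [lsum]
  refine Finset.sum_nbij' (fun v => Fin.tail v) (fun w => Fin.cons j w) ?_ ?_ ?_ ?_ ?_
  · intro a _; exact Finset.mem_univ _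
  · intro w _
    simp only [Finset.mem_filter, Finset.mem_univ, true_and, cons_zero']
  · intro v hv
    simp only [Finset.mem_filter, Finset.mem_univ, true_and] at hv
    have h0 : v 0 = j := Fin.ext hv
    rw [← h0]
    exact Fin.cons_self_tail v
  · intro w _; exact Fin.tail_cons _ _
  · intro v hv
    simp only [Finset.mem_filter, Finset.mem_univ, true_and] at hv
    have h0 : v 0 = j := Fin.ext hv
    rw [← h0, Fin.cons_self_tail v]

lemma lsum_total (D : (∀ i, Fin (n i)) → ℕ) :
    ∑ t ∈ Finset.range (n 0), lsum n t D = ∑ v, D v := by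
  classical
  exact Finset.sum_fiberwise_of_maps_to (fun v _ => Finset.mem_range.2 (v 0).isLt) D

lemma lsum_congr {D E : (∀ i, Fin (n i)) → ℕ} (t : ℕ)
    (h : ∀ v : ∀ i, Fin (n i), (v 0 : ℕ) = t → D v = E v) : lsum n t D = lsum n t E := by
  refine Finset.sum_congr rfl fun v hv => ?_
  exact h v (by simpa using hv)

lemma lsum_mono {D E : (∀ i, Fin (n i)) → ℕ} (t : ℕ)
    (h : ∀ v : ∀ i, Fin (n i), (v 0 : ℕ) = t → D v ≤ E v) : lsum n t D ≤ lsum n t E := by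
  refine Finset.sum_le_sum fun v hv => ?_
  exact h v (by simpa using hv)

/-- adjacency along a non-zero coordinate -/
lemma adj_cons_of_adj {w w' : PiW n} (j : Fin (n 0))
    (h : (boxProdFamily fun i : Fin k => pathGraph (n i.succ)).Adj w w') :
    (boxProdFamily fun i : Fin (k+1) => pathGraph (n i)).Adj
      (Fin.cons j w) (Fin.cons j w') := by
  obtain ⟨i, hadj, hrest⟩ := h
  refine ⟨i.succ, by simpa using hadj, ?_⟩
  intro l hl
  rcases Fin.eq_zero_or_eq_succ l with rfl | ⟨l', rfl⟩
  · simp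
  · simp only [Fin.cons_succ]
    exact hrest l' (by simpa using hl)

/-- adjacency along coordinate zero -/
lemma adj_cons_zero {j j' : Fin (n 0)} (w : PiW n)
    (h : (pathGraph (n 0)).Adj j j') :
    (boxProdFamily fun i : Fin (k+1) => pathGraph (n i)).Adj
      (Fin.cons j w) (Fin.cons j' w) := by
  refine ⟨0, by simpa using h, ?_⟩
  intro l hl
  rcases Fin.eq_zero_or_eq_succ l with rfl | ⟨l', rfl⟩
  · exact absurd rfl hl
  · simp

end Prod

/-! ### lifting pebbling in a layer -/

section Lift

variable {k : ℕ} (n : Fin (k+1) → ℕ)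

noncomputable def patch (j : Fin (n 0)) (A : PiW n → ℕ) (D : (∀ i, Fin (n i)) → ℕ) :
    (∀ i, Fin (n i)) → ℕ :=
  fun v => if v 0 = j then A (Fin.tail v) else D v

lemma patch_self (j : Fin (n 0)) (D : (∀ i, Fin (n i)) → ℕ) :
    patch n j (fun w => D (Fin.cons j w)) D = D := by
  funext v
  rw [patch]
  split_ifs with h
  · rw [← h, Fin.cons_self_tail]
  · rfl

lemma patch_apply_cons (j : Fin (n 0)) (A : PiW n → ℕ) (D : (∀ i, Fin (n i)) → ℕ)
    (w : PiW n) : patch n j A D (Fin.cons j w) = A w := by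
  rw [patch]
  simp

lemma patch_apply_off (j : Fin (n 0)) (A : PiW n → ℕ) (D : (∀ i, Fin (n i)) → ℕ)
    (v : ∀ i, Fin (n i)) (hv : v 0 ≠ j) : patch n j A D v = D v := by
  rw [patch, if_neg hv]

lemma lift_step (j : Fin (n 0)) (D : (∀ i, Fin (n i)) → ℕ) {A A' : PiW n → ℕ}
    (h : PebblingStep (boxProdFamily fun i : Fin k => pathGraph (n i.succ)) A A') :
    PebblingStep (boxProdFamily fun i : Fin (k+1) => pathGraph (n i))
      (patch n j A D) (patch n j A' D) := by
  obtain ⟨u, w, hadj, h2, rfl⟩ := h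
  refine ⟨Fin.cons j u, Fin.cons j w, adj_cons_of_adj n j hadj, ?_, ?_⟩
  · rwa [patch_apply_cons]
  · funext v
    rcases eq_or_ne (v 0) j with h0 | h0
    · have hv : v = Fin.cons j (Fin.tail v) := by rw [← h0, Fin.cons_self_tail]
      rw [patch]
      simp only [if_pos h0]
      have hinj : ∀ (x : PiW n), (v = Fin.cons j x) ↔ Fin.tail v = x := by
        intro x
        constructor
        · intro hh; rw [hh]; exact Fin.tail_cons _ _
        · intro hh; rw [← hh]; exact hv
      by_cases hu : Fin.tail v = u
      · rw [if_pos hu, if_pos ((hinj u).2 hu), patch_apply_cons]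
      · rw [if_neg hu, if_neg (fun hh => hu ((hinj u).1 hh))]
        by_cases hw : Fin.tail v = w
        · rw [if_pos hw, if_pos ((hinj w).2 hw), patch_apply_cons]
        · rw [if_neg hw, if_neg (fun hh => hw ((hinj w).1 hh)), patch, if_pos h0]
    · have hvu : v ≠ Fin.cons j u := fun hh => h0 (by rw [hh]; simp)
      have hvw : v ≠ Fin.cons j w := fun hh => h0 (by rw [hh]; simp)
      rw [patch_apply_off n j _ _ v h0, if_neg hvu, if_neg hvw, patch_apply_off n j _ _ v h0]

lemma lift_reach (j : Fin (n 0)) (D : (∀ i, Fin (n i)) → ℕ) {A A' : PiW n → ℕ}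
    (h : Reach (boxProdFamily fun i : Fin k => pathGraph (n i.succ)) A A') :
    Reach (boxProdFamily fun i : Fin (k+1) => pathGraph (n i))
      (patch n j A D) (patch n j A' D) :=
  Relation.ReflTransGen.lift (fun B => patch n j B D) (fun _ _ hs => lift_step n j D hs) _ _ h

/-- Cover one layer, using the induction hypothesis for the smaller product. -/
lemma cover_layer
    (hcov : ∀ A : PiW n → ℕ,
      (∏ i : Fin k, (2 ^ n i.succ - 1)) ≤ ∑ w, A w →
      Coverable (boxProdFamily fun i : Fin k => pathGraph (n i.succ)) A)
    (j : Fin (n 0)) (D : (∀ i, Fin (n i)) → ℕ)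
    (hD : (∏ i : Fin k, (2 ^ n i.succ - 1)) ≤ lsum n (j : ℕ) D) :
    ∃ D', Reach (boxProdFamily fun i : Fin (k+1) => pathGraph (n i)) D D' ∧
      (∀ v : ∀ i, Fin (n i), v 0 = j → 1 ≤ D' v) ∧
      (∀ v : ∀ i, Fin (n i), v 0 ≠ j → D' v = D v) := by
  rw [lsum_fiber] at hD
  obtain ⟨A', hreach, hA'⟩ := hcov (fun w => D (Fin.cons j w)) hD
  refine ⟨patch n j A' D, ?_, ?_, ?_⟩
  · have := lift_reach n j D hreach
    rwa [patch_self] at this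
  · intro v hv
    have hv' : v = Fin.cons j (Fin.tail v) := by rw [← hv, Fin.cons_self_tail]
    rw [hv', patch_apply_cons]
    exact hA' _
  · intro v hv
    exact patch_apply_off n j A' D v hv

end Lift

/-! ### cross-layer moves and exporting pebbles -/

section Export

variable {k : ℕ} (n : Fin (k+1) → ℕ)

lemma cross_move (jf jt : Fin (n 0)) (hadj : (pathGraph (n 0)).Adj jf jt)
    (D : (∀ i, Fin (n i)) → ℕ) (w0 : PiW n) (h2 : 2 ≤ D (Fin.cons jf w0)) :
    ∃ D₁, PebblingStep (boxProdFamily fun i : Fin (k+1) => pathGraph (n i)) D D₁ ∧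
      lsum n (jf : ℕ) D₁ + 2 = lsum n (jf : ℕ) D ∧
      lsum n (jt : ℕ) D₁ = lsum n (jt : ℕ) D + 1 ∧
      (∀ x : ∀ i, Fin (n i), x 0 ≠ jf → x 0 ≠ jt → D₁ x = D x) ∧
      (∀ x : ∀ i, Fin (n i), x 0 = jt → D x ≤ D₁ x) := by
  classical
  set u : ∀ i, Fin (n i) := Fin.cons jf w0 with hu
  set v : ∀ i, Fin (n i) := Fin.cons jt w0 with hv
  have hne : jf ≠ jt := hadj.ne
  have hu0 : u 0 = jf := by simp [hu]
  have hv0 : v 0 = jt := by simp [hv]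
  have huv : u ≠ v := fun h => hne (by rw [← hu0, h, hv0])
  set D₁ : (∀ i, Fin (n i)) → ℕ :=
    fun w => if w = u then D u - 2 else if w = v then D v + 1 else D w with hD₁
  have hupd : D₁ = Function.update (Function.update D u (D u - 2)) v (D v + 1) :=
    step_eq_update D u v huv
  have hstep : PebblingStep (boxProdFamily fun i : Fin (k+1) => pathGraph (n i)) D D₁ :=
    ⟨u, v, adj_cons_zero n w0 hadj, h2, hD₁⟩
  set sf := Finset.univ.filter (fun x : ∀ i, Fin (n i) => (x 0 : ℕ) = (jf : ℕ)) with hsf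
  set st := Finset.univ.filter (fun x : ∀ i, Fin (n i) => (x 0 : ℕ) = (jt : ℕ)) with hst
  have husf : u ∈ sf := by simp [hsf, hu0]
  have hvst : v ∈ st := by simp [hst, hv0]
  have hvsf : v ∉ sf := by
    simp only [hsf, Finset.mem_filter, Finset.mem_univ, true_and, hv0]
    exact fun h => hne (Fin.ext h.symm)
  have hust : u ∉ st := by
    simp only [hst, Finset.mem_filter, Finset.mem_univ, true_and, hu0]
    exact fun h => hne (Fin.ext h)
  refine ⟨D₁, hstep, ?_, ?_, ?_, ?_⟩
  · -- source layer sum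
    have e1 : lsum n (jf : ℕ) D₁ = (∑ x ∈ sf.erase u, D x) + (D u - 2) := by
      rw [lsum, ← hsf, hupd, sum_update, Finset.erase_eq_of_notMem hvsf, if_neg hvsf,
        add_zero, sum_update, if_pos husf]
    have e2 : (∑ x ∈ sf.erase u, D x) + D u = lsum n (jf : ℕ) D := by
      rw [lsum, ← hsf]; exact Finset.sum_erase_add _ _ husf
    omega
  · -- target layer sum
    have e1 : lsum n (jt : ℕ) D₁ = (∑ x ∈ st.erase v, D x) + (D v + 1) := by
      rw [lsum, ← hst, hupd, sum_update, if_pos hvst]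
      congr 1
      refine Finset.sum_congr rfl fun x hx => ?_
      exact Function.update_of_ne (by rintro rfl; exact hust (Finset.mem_of_mem_erase hx)) _ _
    have e2 : (∑ x ∈ st.erase v, D x) + D v = lsum n (jt : ℕ) D := by
      rw [lsum, ← hst]; exact Finset.sum_erase_add _ _ hvst
    omega
  · intro x hxf hxt
    have hxu : x ≠ u := fun h => hxf (by rw [h, hu0])
    have hxv : x ≠ v := fun h => hxt (by rw [h, hv0])
    simp [hD₁, if_neg hxu, if_neg hxv]
  · intro x hx
    have hxu : x ≠ u := fun h => hne (by rw [← hx, h, hu0])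
    rcases eq_or_ne x v with rfl | hxv
    · simp [hD₁, if_neg hxu]
    · simp [hD₁, if_neg hxu, if_neg hxv]

lemma exportPebbles
    (hbig : 2 * Fintype.card (PiW n) ≤ (∏ i : Fin k, (2 ^ n i.succ - 1)) + 1)
    (jf jt : Fin (n 0)) (hadj : (pathGraph (n 0)).Adj jf jt) :
    ∀ (t : ℕ) (D : (∀ i, Fin (n i)) → ℕ),
      (∏ i : Fin k, (2 ^ n i.succ - 1)) + 2 * t ≤ lsum n (jf : ℕ) D →
      ∃ D', Reach (boxProdFamily fun i : Fin (k+1) => pathGraph (n i)) D D' ∧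
        lsum n (jf : ℕ) D' + 2 * t = lsum n (jf : ℕ) D ∧
        lsum n (jt : ℕ) D' = lsum n (jt : ℕ) D + t ∧
        (∀ x : ∀ i, Fin (n i), x 0 ≠ jf → x 0 ≠ jt → D' x = D x) ∧
        (∀ x : ∀ i, Fin (n i), x 0 = jt → D x ≤ D' x) := by
  intro t
  induction t with
  | zero =>
    intro D _
    exact ⟨D, Relation.ReflTransGen.refl, by omega, by omega, fun _ _ _ => rfl, fun _ _ => le_rfl⟩
  | succ t ih =>
    intro D hD
    -- pigeonhole : some vertex of the source layer carries at least 2 pebbles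
    have hpig : ∃ w0 : PiW n, 2 ≤ D (Fin.cons jf w0) := by
      by_contra hcon
      push_neg at hcon
      have hle : lsum n (jf : ℕ) D ≤ Fintype.card (PiW n) := by
        rw [lsum_fiber]
        calc ∑ w : PiW n, D (Fin.cons jf w) ≤ ∑ _w : PiW n, 1 :=
              Finset.sum_le_sum fun w _ => by have := hcon w; omega
          _ = Fintype.card (PiW n) := by simp
      omega
    obtain ⟨w0, h2⟩ := hpig
    obtain ⟨D₁, hstep, hsf, hst, hoff, hmono⟩ := cross_move n jf jt hadj D w0 h2
    have hD₁ : (∏ i : Fin k, (2 ^ n i.succ - 1)) + 2 * t ≤ lsum n (jf : ℕ) D₁ := by omega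
    obtain ⟨D', hreach, hsf', hst', hoff', hmono'⟩ := ih D₁ hD₁
    refine ⟨D', Relation.ReflTransGen.head hstep hreach, by omega, by omega, ?_, ?_⟩
    · intro x hxf hxt
      rw [hoff' x hxf hxt, hoff x hxf hxt]
    · intro x hx
      exact le_trans (hmono x hx) (hmono' x hx)

end Export

/-! ### the layered covering lemma -/

section Layered

variable {k : ℕ} (n : Fin (k+1) → ℕ)

lemma layered
    (hcov : ∀ A : PiW n → ℕ,
      (∏ i : Fin k, (2 ^ n i.succ - 1)) ≤ ∑ w, A w →
      Coverable (boxProdFamily fun i : Fin k => pathGraph (n i.succ)) A)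
    (hbig : 2 * Fintype.card (PiW n) ≤ (∏ i : Fin k, (2 ^ n i.succ - 1)) + 1) :
    ∀ j : ℕ, j < n 0 → ∀ s : ℕ, (0 < s → j + 1 < n 0) →
      ∀ D : (∀ i, Fin (n i)) → ℕ,
      (∏ i : Fin k, (2 ^ n i.succ - 1)) * (2 ^ (j+1) - 1) + 2 ^ (j+1) * s
        ≤ ∑ t ∈ Finset.range (j+1), lsum n t D →
      ∃ D', Reach (boxProdFamily fun i : Fin (k+1) => pathGraph (n i)) D D' ∧
        (∀ x : ∀ i, Fin (n i), (x 0 : ℕ) ≤ j → 1 ≤ D' x) ∧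
        lsum n (j+1) D + s ≤ lsum n (j+1) D' ∧
        ∀ x : ∀ i, Fin (n i), j < (x 0 : ℕ) → D x ≤ D' x := by
  set c := ∏ i : Fin k, (2 ^ n i.succ - 1) with hc
  intro j
  induction j with
  | zero =>
    intro hj s hs D hD
    simp only [Nat.zero_add]
    rw [Finset.sum_range_one] at hD
    have hD0 : c + 2 * s ≤ lsum n 0 D := by
      have e : (2:ℕ) ^ (0+1) = 2 := by norm_num
      rw [e] at hD; omega
    set jF : Fin (n 0) := ⟨0, hj⟩ with hjF
    have hjFv : (jF : ℕ) = 0 := rfl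
    rcases Nat.eq_zero_or_pos s with rfl | hspos
    · obtain ⟨D', hreach, hcover, hoff⟩ := cover_layer n hcov jF D
        (by rw [← hc]; show c ≤ lsum n 0 D; omega)
      refine ⟨D', hreach, ?_, ?_, ?_⟩
      · intro x hx
        exact hcover x (Fin.ext (by omega))
      · have e1 : lsum n 1 D' = lsum n 1 D := by
          refine lsum_congr n (0+1) fun v hv => ?_
          exact hoff v (fun h => by rw [h, hjFv] at hv; omega)
        omega
      · intro x hx
        exact le_of_eq (hoff x (fun h => by rw [h, hjFv] at hx; omega)).symm
    · have h1 : 1 < n 0 := hs hspos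
      set jT : Fin (n 0) := ⟨1, h1⟩ with hjT
      have hjTv : (jT : ℕ) = 1 := rfl
      have hadj : (pathGraph (n 0)).Adj jF jT := by
        rw [pathGraph_adj]; left; rfl
      obtain ⟨D₁, hreach1, hf1, ht1, hoff1, hmono1⟩ :=
        exportPebbles n hbig jF jT hadj s D (by rw [← hc]; show c + 2*s ≤ lsum n 0 D; omega)
      rw [hjFv] at hf1
      rw [hjTv] at ht1
      obtain ⟨D', hreach2, hcover, hoff2⟩ := cover_layer n hcov jF D₁
        (by rw [← hc]; show c ≤ lsum n 0 D₁; omega)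
      refine ⟨D', hreach1.trans hreach2, ?_, ?_, ?_⟩
      · intro x hx
        exact hcover x (Fin.ext (by omega))
      · have e1 : lsum n 1 D' = lsum n 1 D₁ := by
          refine lsum_congr n (0+1) fun v hv => ?_
          exact hoff2 v (fun h => by rw [h, hjFv] at hv; omega)
        omega
      · intro x hx
        have hxf : x 0 ≠ jF := fun h => by rw [h, hjFv] at hx; omega
        rw [hoff2 x hxf]
        rcases eq_or_ne (x 0) jT with h | h
        · exact hmono1 x h
        · exact le_of_eq (hoff1 x hxf h).symm
  | succ j ihj =>
    intro hjj s hs D hD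
    have hj : j < n 0 := by omega
    rw [Finset.sum_range_succ] at hD
    obtain ⟨Y, hY⟩ : ∃ Y, (2:ℕ) ^ (j+1) = Y + 1 :=
      ⟨2^(j+1) - 1, by have := Nat.one_le_two_pow (n := j+1); omega⟩
    have hp2 : (2:ℕ) ^ (j+1+1) = 2*Y + 2 := by rw [pow_succ, hY]; ring
    have hD' : c * (2*Y+1) + (2*Y+2) * s
        ≤ (∑ t ∈ Finset.range (j+1), lsum n t D) + lsum n (j+1) D := by
      rw [hp2] at hD
      have e : 2*Y + 2 - 1 = 2*Y + 1 := by omega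
      rw [e] at hD
      exact hD
    set jJ : Fin (n 0) := ⟨j+1, hjj⟩ with hjJ
    have hjJv : (jJ : ℕ) = j + 1 := rfl
    by_cases hcase : lsum n (j+1) D < c + 2 * s
    · -- Case B : top layer poor; lower part covers itself and exports r up
      set r := c + 2 * s - lsum n (j+1) D with hr
      have har : lsum n (j+1) D + r = c + 2 * s := by omega
      have hpre : c * (2 ^ (j+1) - 1) + 2 ^ (j+1) * r
          ≤ ∑ t ∈ Finset.range (j+1), lsum n t D := by
        rw [hY, Nat.add_sub_cancel]
        have hYr : Y * r ≤ Y * (c + 2*s) := Nat.mul_le_mul_left Y (by omega)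
        nlinarith [hD', har, hYr]
      obtain ⟨D₁, hreach1, hcov1, hsum1, hmono1⟩ := ihj hj r (fun _ => hjj) D hpre
      have hjsum : c + 2 * s ≤ lsum n (j+1) D₁ := by omega
      rcases Nat.eq_zero_or_pos s with rfl | hspos
      · obtain ⟨D', hreach2, hcover, hoff2⟩ := cover_layer n hcov jJ D₁
          (by rw [← hc]; show c ≤ lsum n (j+1) D₁; omega)
        refine ⟨D', hreach1.trans hreach2, ?_, ?_, ?_⟩
        · intro x hx
          rcases Nat.lt_or_ge (x 0 : ℕ) (j+1) with h | h
          · have h1 := hcov1 x (by omega)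
            have hxne : x 0 ≠ jJ := fun hh => by rw [hh, hjJv] at h; omega
            rw [hoff2 x hxne]; omega
          · exact hcover x (Fin.ext (by omega))
        · have e1 : lsum n (j+1+1) D' = lsum n (j+1+1) D₁ := by
            refine lsum_congr n (j+1+1) fun v hv => ?_
            exact hoff2 v (fun h => by rw [h, hjJv] at hv; omega)
          have e2 : lsum n (j+1+1) D ≤ lsum n (j+1+1) D₁ :=
            lsum_mono n (j+1+1) fun v hv => hmono1 v (by omega)
          omega
        · intro x hx
          have hxne : x 0 ≠ jJ := fun hh => by rw [hh, hjJv] at hx; omega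
          rw [hoff2 x hxne]
          exact hmono1 x (by omega)
      · have h2 : j + 2 < n 0 := hs hspos
        set jT : Fin (n 0) := ⟨j+2, h2⟩ with hjT
        have hjTv : (jT : ℕ) = j + 1 + 1 := rfl
        have hadj : (pathGraph (n 0)).Adj jJ jT := by rw [pathGraph_adj]; left; rfl
        obtain ⟨D₂, hreach2, hf2, ht2, hoff2, hmono2⟩ :=
          exportPebbles n hbig jJ jT hadj s D₁
            (by rw [← hc]; show c + 2*s ≤ lsum n (j+1) D₁; omega)
        rw [hjJv] at hf2
        rw [hjTv] at ht2
        obtain ⟨D', hreach3, hcover, hoff3⟩ := cover_layer n hcov jJ D₂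
          (by rw [← hc]; show c ≤ lsum n (j+1) D₂; omega)
        refine ⟨D', (hreach1.trans hreach2).trans hreach3, ?_, ?_, ?_⟩
        · intro x hx
          rcases Nat.lt_or_ge (x 0 : ℕ) (j+1) with h | h
          · have hxJ : x 0 ≠ jJ := fun hh => by rw [hh, hjJv] at h; omega
            have hxT : x 0 ≠ jT := fun hh => by rw [hh, hjTv] at h; omega
            have h1 := hcov1 x (by omega)
            rw [hoff3 x hxJ, hoff2 x hxJ hxT]; omega
          · exact hcover x (Fin.ext (by omega))
        · have e1 : lsum n (j+1+1) D' = lsum n (j+1+1) D₂ := by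
            refine lsum_congr n (j+1+1) fun v hv => ?_
            exact hoff3 v (fun h => by rw [h, hjJv] at hv; omega)
          have e2 : lsum n (j+1+1) D ≤ lsum n (j+1+1) D₁ :=
            lsum_mono n (j+1+1) fun v hv => hmono1 v (by omega)
          omega
        · intro x hx
          have hxJ : x 0 ≠ jJ := fun hh => by rw [hh, hjJv] at hx; omega
          rw [hoff3 x hxJ]
          rcases eq_or_ne (x 0) jT with h | h
          · exact le_trans (hmono1 x (by omega)) (hmono2 x h)
          · rw [hoff2 x hxJ h]
            exact hmono1 x (by omega)
    · -- Case A : top layer rich; export δ down, s up, cover top, then cover lower part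
      push_neg at hcase
      set δ := c * Y - (∑ t ∈ Finset.range (j+1), lsum n t D) with hδ
      have hatop : c + 2 * s + 2 * δ ≤ lsum n (j+1) D := by
        rcases le_or_gt (c * Y) (∑ t ∈ Finset.range (j+1), lsum n t D) with h | h
        · have hδ0 : δ = 0 := by omega
          omega
        · have hδsum : δ + (∑ t ∈ Finset.range (j+1), lsum n t D) = c * Y := by omega
          have goalz : (c:ℤ) + 2*s + 2*δ ≤ (lsum n (j+1) D : ℤ) := by
            have h1 : ((c * (2*Y+1) + (2*Y+2) * s : ℕ) : ℤ)
                ≤ (((∑ t ∈ Finset.range (j+1), lsum n t D) + lsum n (j+1) D : ℕ) : ℤ) := by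
              exact_mod_cast hD'
            have h2 : ((δ + ∑ t ∈ Finset.range (j+1), lsum n t D : ℕ) : ℤ) = ((c*Y : ℕ) : ℤ) := by
              exact_mod_cast hδsum
            push_cast at h1 h2
            have hB : (0:ℤ) ≤ ∑ x ∈ Finset.range (j+1), (lsum n x D : ℤ) :=
              Finset.sum_nonneg fun _ _ => Int.ofNat_nonneg _
            nlinarith [h1, h2, hB, mul_nonneg (Int.ofNat_nonneg Y) (Int.ofNat_nonneg s),
              mul_nonneg (Int.ofNat_nonneg c) (Int.ofNat_nonneg Y)]
          exact_mod_cast goalz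
      set jD : Fin (n 0) := ⟨j, by omega⟩ with hjD
      have hjDv : (jD : ℕ) = j := rfl
      have hadjD : (pathGraph (n 0)).Adj jJ jD := by rw [pathGraph_adj]; right; rfl
      obtain ⟨D₁, hreach1, hf1, ht1, hoff1, hmono1⟩ :=
        exportPebbles n hbig jJ jD hadjD δ D
          (by rw [← hc]; show c + 2*δ ≤ lsum n (j+1) D; omega)
      rw [hjJv] at hf1
      rw [hjDv] at ht1
      have key : ∃ D₃, Reach (boxProdFamily fun i : Fin (k+1) => pathGraph (n i)) D₁ D₃ ∧
          (∀ x : ∀ i, Fin (n i), x 0 = jJ → 1 ≤ D₃ x) ∧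
          (lsum n (j+1+1) D + s ≤ lsum n (j+1+1) D₃) ∧
          (∀ x : ∀ i, Fin (n i), (x 0 : ℕ) ≤ j → D₃ x = D₁ x) ∧
          (∀ x : ∀ i, Fin (n i), j + 2 ≤ (x 0 : ℕ) → D x ≤ D₃ x) := by
        rcases Nat.eq_zero_or_pos s with rfl | hspos
        · obtain ⟨D₃, hreach2, hcover, hoff2⟩ := cover_layer n hcov jJ D₁
            (by rw [← hc]; show c ≤ lsum n (j+1) D₁; omega)
          refine ⟨D₃, hreach2, fun x hx => hcover x hx, ?_, ?_, ?_⟩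
          · have e1 : lsum n (j+1+1) D₃ = lsum n (j+1+1) D₁ := by
              refine lsum_congr n (j+1+1) fun v hv => ?_
              exact hoff2 v (fun h => by rw [h, hjJv] at hv; omega)
            have e2 : lsum n (j+1+1) D₁ = lsum n (j+1+1) D := by
              refine lsum_congr n (j+1+1) fun v hv => ?_
              exact hoff1 v (fun h => by rw [h, hjJv] at hv; omega)
                (fun h => by rw [h, hjDv] at hv; omega)
            omega
          · intro x hx
            refine (hoff2 x (fun h => by rw [h, hjJv] at hx; omega)).trans ?_
            rfl
          · intro x hx
            rw [hoff2 x (fun h => by rw [h, hjJv] at hx; omega),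
              hoff1 x (fun h => by rw [h, hjJv] at hx; omega)
                (fun h => by rw [h, hjDv] at hx; omega)]
        · have h2 : j + 2 < n 0 := hs hspos
          set jT : Fin (n 0) := ⟨j+2, h2⟩ with hjT
          have hjTv : (jT : ℕ) = j + 1 + 1 := rfl
          have hadjT : (pathGraph (n 0)).Adj jJ jT := by rw [pathGraph_adj]; left; rfl
          obtain ⟨D₂, hreach2, hf2, ht2, hoff2, hmono2⟩ :=
            exportPebbles n hbig jJ jT hadjT s D₁
              (by rw [← hc]; show c + 2*s ≤ lsum n (j+1) D₁; omega)
          rw [hjJv] at hf2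
          rw [hjTv] at ht2
          obtain ⟨D₃, hreach3, hcover, hoff3⟩ := cover_layer n hcov jJ D₂
            (by rw [← hc]; show c ≤ lsum n (j+1) D₂; omega)
          refine ⟨D₃, hreach2.trans hreach3, fun x hx => hcover x hx, ?_, ?_, ?_⟩
          · have e1 : lsum n (j+1+1) D₃ = lsum n (j+1+1) D₂ := by
              refine lsum_congr n (j+1+1) fun v hv => ?_
              exact hoff3 v (fun h => by rw [h, hjJv] at hv; omega)
            have e2 : lsum n (j+1+1) D₁ = lsum n (j+1+1) D := by
              refine lsum_congr n (j+1+1) fun v hv => ?_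
              exact hoff1 v (fun h => by rw [h, hjJv] at hv; omega)
                (fun h => by rw [h, hjDv] at hv; omega)
            omega
          · intro x hx
            have hxJ : x 0 ≠ jJ := fun h => by rw [h, hjJv] at hx; omega
            have hxT : x 0 ≠ jT := fun h => by rw [h, hjTv] at hx; omega
            rw [hoff3 x hxJ, hoff2 x hxJ hxT]
          · intro x hx
            have hxJ : x 0 ≠ jJ := fun h => by rw [h, hjJv] at hx; omega
            have hxD : x 0 ≠ jD := fun h => by rw [h, hjDv] at hx; omega
            rw [hoff3 x hxJ]
            rcases eq_or_ne (x 0) jT with h | h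
            · exact le_trans (le_of_eq (hoff1 x hxJ hxD).symm) (hmono2 x h)
            · rw [hoff2 x hxJ h, hoff1 x hxJ hxD]
      obtain ⟨D₃, hreach23, hcovJ, hsumT, hlow3, hhigh3⟩ := key
      have hpre3 : c * (2 ^ (j+1) - 1) + 2 ^ (j+1) * 0
          ≤ ∑ t ∈ Finset.range (j+1), lsum n t D₃ := by
        have e0 : ∑ t ∈ Finset.range (j+1), lsum n t D₃
            = ∑ t ∈ Finset.range (j+1), lsum n t D₁ := by
          refine Finset.sum_congr rfl fun t ht => ?_
          rw [Finset.mem_range] at ht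
          exact lsum_congr n t fun v hv => hlow3 v (by omega)
        have e1 : ∑ t ∈ Finset.range j, lsum n t D₁
            = ∑ t ∈ Finset.range j, lsum n t D := by
          refine Finset.sum_congr rfl fun t ht => ?_
          rw [Finset.mem_range] at ht
          refine lsum_congr n t fun v hv => ?_
          exact hoff1 v (fun h => by rw [h, hjJv] at hv; omega)
            (fun h => by rw [h, hjDv] at hv; omega)
        have e2 : ∑ t ∈ Finset.range (j+1), lsum n t D₁
            = (∑ t ∈ Finset.range j, lsum n t D) + lsum n j D₁ := by
          rw [Finset.sum_range_succ, e1]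
        have e3 : ∑ t ∈ Finset.range (j+1), lsum n t D
            = (∑ t ∈ Finset.range j, lsum n t D) + lsum n j D := Finset.sum_range_succ _ _
        rw [hY, Nat.add_sub_cancel, e0, e2]
        omega
      obtain ⟨D₄, hreach4, hcov4, _, hmono4⟩ := ihj hj 0 (by omega) D₃ hpre3
      refine ⟨D₄, hreach1.trans (hreach23.trans hreach4), ?_, ?_, ?_⟩
      · intro x hx
        rcases Nat.lt_or_ge (x 0 : ℕ) (j+1) with h | h
        · exact hcov4 x (by omega)
        · have hxj : (x 0 : ℕ) = j + 1 := by omega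
          have hm := hmono4 x (by omega)
          have h1 := hcovJ x (Fin.ext hxj)
          omega
      · have hm : lsum n (j+1+1) D₃ ≤ lsum n (j+1+1) D₄ :=
          lsum_mono n (j+1+1) fun v hv => hmono4 v (by omega)
        omega
      · intro x hx
        exact le_trans (hhigh3 x (by omega)) (hmono4 x (by omega))

end Layered

/-! ### arithmetic : the pigeonhole bound -/

lemma two_mul_le_two_pow {m : ℕ} (hm : 1 ≤ m) : 2 * m ≤ 2 ^ m := by
  induction m with
  | zero => omega
  | succ m ih =>
    rcases Nat.eq_zero_or_pos m with rfl | hm'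
    · norm_num
    · have h2 : 2 ≤ 2 ^ m := by
        calc 2 = 2^1 := by norm_num
        _ ≤ 2^m := Nat.pow_le_pow_right (by norm_num) hm'
      have h3 := ih hm'
      rw [pow_succ]
      omega

lemma one_le_prod_pow {k : ℕ} (f : Fin k → ℕ) (hf : ∀ i, 1 ≤ f i) :
    1 ≤ ∏ i, (2 ^ f i - 1) := by
  refine Finset.one_le_prod' fun i _ => ?_
  have h2 : 2 ≤ 2 ^ f i := by
    calc 2 = 2^1 := by norm_num
    _ ≤ 2 ^ f i := Nat.pow_le_pow_right (by norm_num) (hf i)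
  omega

lemma card_bound : ∀ (k : ℕ) (n : Fin k → ℕ), (∀ i, 1 ≤ n i) →
    2 * ∏ i, n i ≤ (∏ i, (2 ^ n i - 1)) + 1 := by
  intro k
  induction k with
  | zero => intro n hn; simp
  | succ k ih =>
    intro n hn
    rw [Fin.prod_univ_succ, Fin.prod_univ_succ]
    have IH : 2 * ∏ i : Fin k, n i.succ ≤ (∏ i : Fin k, (2 ^ n i.succ - 1)) + 1 :=
      ih (fun i => n i.succ) (fun i => hn _)
    set m := n 0 with hm0
    set Pn := ∏ i : Fin k, n i.succ with hPn
    set Pc := ∏ i : Fin k, (2 ^ n i.succ - 1) with hPc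
    have hm : 1 ≤ m := hn 0
    have hPc1 : 1 ≤ Pc := one_le_prod_pow _ (fun i => hn i.succ)
    have hx : 2 * m ≤ 2 ^ m := two_mul_le_two_pow hm
    obtain ⟨X, hX⟩ : ∃ X, (2:ℕ) ^ m = X + 1 :=
      ⟨2 ^ m - 1, by have := Nat.one_le_two_pow (n := m); omega⟩
    rw [hX, Nat.add_sub_cancel]
    have hz : (2:ℤ) * (m * Pn) ≤ X * Pc + 1 := by
      have f1 : (2:ℤ) * Pn ≤ Pc + 1 := by exact_mod_cast IH
      have f2 : (2:ℤ) * m ≤ X + 1 := by exact_mod_cast (hX ▸ hx)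
      have hPc' : (1:ℤ) ≤ (Pc:ℤ) := by exact_mod_cast hPc1
      have hm' : (1:ℤ) ≤ (m:ℤ) := by exact_mod_cast hm
      have hPn' : (0:ℤ) ≤ (Pn:ℤ) := Int.ofNat_nonneg _
      nlinarith [mul_le_mul_of_nonneg_left f1 (by linarith : (0:ℤ) ≤ (m:ℤ)),
        mul_le_mul_of_nonneg_right (by linarith : (m:ℤ) - 1 ≤ (X:ℤ) - m)
          (by linarith : (0:ℤ) ≤ (Pc:ℤ)),
        mul_le_mul_of_nonneg_left hPc' (by linarith : (0:ℤ) ≤ (m:ℤ) - 1)]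
    exact_mod_cast hz

/-! ### the upper bound -/

theorem coverable_of_prod_le : ∀ (k : ℕ) (n : Fin k → ℕ), (∀ i, 1 ≤ n i) →
    ∀ D : (∀ i, Fin (n i)) → ℕ, (∏ i, (2 ^ n i - 1)) ≤ ∑ v, D v →
    Coverable (boxProdFamily fun i => pathGraph (n i)) D := by
  intro k
  induction k with
  | zero =>
    intro n hn D hD
    refine ⟨D, Relation.ReflTransGen.refl, fun v => ?_⟩
    have h1 : ∑ w, D w = D default := by
      rw [Fintype.sum_unique]
    have h2 : v = default := Unique.eq_default v
    rw [h2]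
    simpa [h1] using hD
  | succ k ih =>
    intro n hn D hD
    have hcov : ∀ A : PiW n → ℕ,
        (∏ i : Fin k, (2 ^ n i.succ - 1)) ≤ ∑ w, A w →
        Coverable (boxProdFamily fun i : Fin k => pathGraph (n i.succ)) A :=
      fun A hA => ih (fun i => n i.succ) (fun i => hn _) A hA
    have hbig : 2 * Fintype.card (PiW n) ≤ (∏ i : Fin k, (2 ^ n i.succ - 1)) + 1 := by
      have hcard : Fintype.card (PiW n) = ∏ i : Fin k, n i.succ := by
        rw [Fintype.card_pi]
        simp
      rw [hcard]
      exact card_bound k (fun i => n i.succ) (fun i => hn _)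
    have hm : 1 ≤ n 0 := hn 0
    have hpre : (∏ i : Fin k, (2 ^ n i.succ - 1)) * (2 ^ (n 0 - 1 + 1) - 1)
        + 2 ^ (n 0 - 1 + 1) * 0 ≤ ∑ t ∈ Finset.range (n 0 - 1 + 1), lsum n t D := by
      have e : n 0 - 1 + 1 = n 0 := by omega
      rw [e, lsum_total, mul_zero, add_zero]
      calc (∏ i : Fin k, (2 ^ n i.succ - 1)) * (2 ^ n 0 - 1)
          = ∏ i : Fin (k+1), (2 ^ n i - 1) := by rw [Fin.prod_univ_succ]; ring
        _ ≤ ∑ v, D v := hD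
    obtain ⟨D', hreach, hcover, -, -⟩ :=
      layered n hcov hbig (n 0 - 1) (by omega) 0 (by omega) D hpre
    exact ⟨D', hreach, fun v => hcover v (by have := (v 0).isLt; omega)⟩

/-! ### the lower bound via a weight function -/

section Lower

variable {k : ℕ} {n : Fin k → ℕ}

/-- weight exponent : sum of the coordinates -/
def wt (v : ∀ i, Fin (n i)) : ℕ := ∑ i, (v i : ℕ)

/-- potential of a distribution -/
def pot (D : (∀ i, Fin (n i)) → ℕ) : ℕ := ∑ v, D v * 2 ^ wt v

lemma wt_adj {u v : ∀ i, Fin (n i)}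
    (h : (boxProdFamily fun i => pathGraph (n i)).Adj u v) : wt v ≤ wt u + 1 := by
  obtain ⟨i0, hadj, hrest⟩ := h
  rw [pathGraph_adj] at hadj
  have hsum_u : wt u = (∑ i ∈ Finset.univ.erase i0, (u i : ℕ)) + (u i0 : ℕ) :=
    (Finset.sum_erase_add _ _ (Finset.mem_univ i0)).symm
  have hsum_v : wt v = (∑ i ∈ Finset.univ.erase i0, (v i : ℕ)) + (v i0 : ℕ) :=
    (Finset.sum_erase_add _ _ (Finset.mem_univ i0)).symm
  have he : ∑ i ∈ Finset.univ.erase i0, (v i : ℕ) = ∑ i ∈ Finset.univ.erase i0, (u i : ℕ) :=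
    Finset.sum_congr rfl fun i hi => by rw [hrest i (Finset.ne_of_mem_erase hi)]
  omega

lemma pot_step {E E' : (∀ i, Fin (n i)) → ℕ}
    (h : PebblingStep (boxProdFamily fun i => pathGraph (n i)) E E') : pot E' ≤ pot E := by
  obtain ⟨u, v, hadj, h2, rfl⟩ := h
  have huv : u ≠ v := hadj.ne
  have hq : 2 ^ wt v ≤ 2 * 2 ^ wt u := by
    calc 2 ^ wt v ≤ 2 ^ (wt u + 1) := Nat.pow_le_pow_right (by norm_num) (wt_adj hadj)
    _ = 2 * 2 ^ wt u := by rw [pow_succ]; ring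
  have hfun : (fun x => (if x = u then E u - 2 else if x = v then E v + 1 else E x) * 2 ^ wt x)
      = Function.update (Function.update (fun x => E x * 2 ^ wt x) u ((E u - 2) * 2 ^ wt u))
          v ((E v + 1) * 2 ^ wt v) := by
    funext x
    rcases eq_or_ne x u with rfl | hxu
    · rw [if_pos rfl, Function.update_of_ne huv, Function.update_self]
    · rw [if_neg hxu]
      rcases eq_or_ne x v with rfl | hxv
      · rw [if_pos rfl, Function.update_self]
      · rw [if_neg hxv, Function.update_of_ne hxv, Function.update_of_ne hxu]
  rw [pot, hfun, sum_update, sum_update, if_pos (Finset.mem_univ v),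
    if_pos (Finset.mem_erase.2 ⟨huv, Finset.mem_univ u⟩)]
  have hpotE : pot E = (∑ x ∈ (Finset.univ.erase v).erase u, E x * 2 ^ wt x)
      + E u * 2 ^ wt u + E v * 2 ^ wt v := by
    rw [pot, ← Finset.sum_erase_add _ _ (Finset.mem_univ v),
      ← Finset.sum_erase_add _ _ (Finset.mem_erase.2 ⟨huv, Finset.mem_univ u⟩)]
  rw [hpotE]
  have he : (E u - 2) * 2 ^ wt u + 2 * 2 ^ wt u = E u * 2 ^ wt u := by
    rw [← add_mul]
    congr 1
    omega
  have hev : (E v + 1) * 2 ^ wt v = E v * 2 ^ wt v + 2 ^ wt v := by ring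
  omega

lemma pot_reach {E E' : (∀ i, Fin (n i)) → ℕ}
    (h : Reach (boxProdFamily fun i => pathGraph (n i)) E E') : pot E' ≤ pot E := by
  induction h with
  | refl => exact le_rfl
  | tail _ hstep ih => exact le_trans (pot_step hstep) ih

end Lower

/-! ### the value of the simple distribution -/

lemma sum_two_pow_wt : ∀ (k : ℕ) (n : Fin k → ℕ),
    ∑ v : (∀ i, Fin (n i)), 2 ^ (∑ i, (v i : ℕ)) = ∏ i, (2 ^ n i - 1) := by
  intro k
  induction k with
  | zero =>
    intro n
    rw [Fintype.sum_unique]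
    simp
  | succ k ih =>
    intro n
    rw [← Fintype.sum_equiv (Fin.consEquiv fun i => Fin (n i))
      (fun p => 2 ^ (∑ i, ((Fin.cons p.1 p.2 : ∀ i, Fin (n i)) i : ℕ)))
      (fun v => 2 ^ (∑ i, (v i : ℕ))) (fun p => rfl)]
    have he : ∀ p : Fin (n 0) × (∀ i : Fin k, Fin (n i.succ)),
        (∑ i, ((Fin.cons p.1 p.2 : ∀ i, Fin (n i)) i : ℕ))
          = (p.1 : ℕ) + ∑ i : Fin k, (p.2 i : ℕ) := by
      intro p
      rw [Fin.sum_univ_succ]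
      simp
    calc ∑ p : Fin (n 0) × (∀ i : Fin k, Fin (n i.succ)),
          2 ^ (∑ i, ((Fin.cons p.1 p.2 : ∀ i, Fin (n i)) i : ℕ))
        = ∑ p : Fin (n 0) × (∀ i : Fin k, Fin (n i.succ)),
            2 ^ (p.1 : ℕ) * 2 ^ (∑ i : Fin k, (p.2 i : ℕ)) := by
          refine Finset.sum_congr rfl fun p _ => ?_
          rw [he p, pow_add]
      _ = (∑ j : Fin (n 0), 2 ^ (j : ℕ))
            * (∑ w : ∀ i : Fin k, Fin (n i.succ), 2 ^ (∑ i : Fin k, (w i : ℕ))) := by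
          rw [Fintype.sum_prod_type, Finset.sum_mul]
          refine Finset.sum_congr rfl fun j _ => ?_
          rw [Finset.mul_sum]
      _ = (2 ^ n 0 - 1) * ∏ i : Fin k, (2 ^ n i.succ - 1) := by
          rw [geom_two, ih (fun i => n i.succ)]
      _ = ∏ i : Fin (k+1), (2 ^ n i - 1) := by rw [Fin.prod_univ_succ]

theorem prod_le_of_mem (k : ℕ) (n : Fin k → ℕ) (hn : ∀ i, 1 ≤ n i) (N : ℕ)
    (hN : ∀ D : (∀ i, Fin (n i)) → ℕ, ∑ v, D v = N →
      Coverable (boxProdFamily fun i => pathGraph (n i)) D) :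
    ∏ i, (2 ^ n i - 1) ≤ N := by
  classical
  set z : ∀ i, Fin (n i) := fun i => ⟨0, hn i⟩ with hz
  set D0 : (∀ i, Fin (n i)) → ℕ := fun v => if v = z then N else 0 with hD0
  have hsum : ∑ v, D0 v = N := by
    rw [hD0]
    simp [Finset.sum_ite_eq']
  obtain ⟨D', hreach, hcov⟩ := hN D0 hsum
  have hwz : wt z = 0 := by
    rw [wt]
    simp [hz]
  have hpot0 : pot D0 = N := by
    rw [pot]
    have he : ∀ v : ∀ i, Fin (n i), D0 v * 2 ^ wt v = if v = z then N * 2 ^ wt z else 0 := by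
      intro v
      rcases eq_or_ne v z with rfl | h
      · simp [hD0]
      · simp [hD0, h]
    rw [Finset.sum_congr rfl fun v _ => he v]
    simp [hwz]
  have hlow : ∑ v : (∀ i, Fin (n i)), 2 ^ wt v ≤ pot D' := by
    rw [pot]
    exact Finset.sum_le_sum fun v _ => by
      have := hcov v
      calc 2 ^ wt v = 1 * 2 ^ wt v := (one_mul _).symm
      _ ≤ D' v * 2 ^ wt v := Nat.mul_le_mul_right _ (hcov v)
  have hP : ∑ v : (∀ i, Fin (n i)), 2 ^ wt v = ∏ i, (2 ^ n i - 1) := by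
    rw [← sum_two_pow_wt k n]
    rfl
  have := pot_reach hreach
  omega


theorem cover_pebbling_prod_paths (k : ℕ) (n : Fin k → ℕ) (hn : ∀ i, 1 ≤ n i) :
    coverPebblingNumber (boxProdFamily fun i => pathGraph (n i)) =
      ∏ i, (2 ^ n i - 1) := by
  have hmem : (∏ i, (2 ^ n i - 1)) ∈
      {N | ∀ D : (∀ i, Fin (n i)) → ℕ, ∑ v, D v = N →
        Coverable (boxProdFamily fun i => pathGraph (n i)) D} :=
    fun D hD => coverable_of_prod_le k n hn D (le_of_eq hD.symm)
  rw [coverPebblingNumber]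
  refine le_antisymm (Nat.sInf_le hmem) (le_csInf ⟨_, hmem⟩ ?_)
  intro N hN
  exact prod_le_of_mem k n hn N hN
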